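/- Let d ≥ 1, c > 0, and let f, g be real symmetric d×d matrices with ξᵀfξ ≥ c|ξ|² and ξᵀgξ ≥ c|ξ|² for all ξ ∈ ℝ^d. Then for every real symmetric d×d matrix θ one has Tr(f θ g θ) ≥ c² ‖θ‖², where ‖θ‖ = √Tr(θᵀθ) is the Frobenius norm. In particular, Tr(f θ g θ) > 0 whenever θ ≠ 0. -/

import Mathlib

open Matrix

lemma psd_trace_nonneg {d : ℕ} {A : Matrix (Fin d) (Fin d) ℝ}
    (hA : A.PosSemidef) : 0 ≤ A.trace := by
  rw [Matrix.trace]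
  apply Finset.sum_nonneg
  intro i _
  have := hA.dotProduct_mulVec_nonneg (Pi.single i 1)
  simpa [dotProduct, Matrix.mulVec, Pi.single_apply, Finset.mul_sum] using this

open scoped MatrixOrder in
lemma psd_trace_mul_nonneg {d : ℕ} {A B : Matrix (Fin d) (Fin d) ℝ}
    (hA : A.PosSemidef) (hB : B.PosSemidef) : 0 ≤ (A * B).trace := by
  have hS : CFC.sqrt A * CFC.sqrt A = A := CFC.sqrt_mul_sqrt_self A hA.nonneg
  have h1 := Matrix.trace_mul_cycle (CFC.sqrt A) B (CFC.sqrt A)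
  rw [hS] at h1
  rw [← h1]
  have hherm : (CFC.sqrt A).conjTranspose = CFC.sqrt A := (CFC.sqrt_nonneg A).posSemidef.1
  have := hB.conjTranspose_mul_mul_same (CFC.sqrt A)
  rw [hherm] at this
  exact psd_trace_nonneg this

lemma sub_smul_psd {d : ℕ} {c : ℝ} {f : Matrix (Fin d) (Fin d) ℝ} (hf : f.IsSymm)
    (hfl : ∀ ξ : Fin d → ℝ, c * (ξ ⬝ᵥ ξ) ≤ ξ ⬝ᵥ f.mulVec ξ) :
    (f - c • (1 : Matrix (Fin d) (Fin d) ℝ)).PosSemidef := by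
  refine Matrix.PosSemidef.of_dotProduct_mulVec_nonneg ?_ ?_
  · rw [Matrix.IsHermitian]
    simp only [conjTranspose_sub, conjTranspose_smul]
    rw [show fᴴ = f from hf, conjTranspose_one]
    simp
  · intro x
    have := hfl x
    have h1 : (f - c • (1 : Matrix (Fin d) (Fin d) ℝ)) *ᵥ x = f *ᵥ x - c • x := by
      simp [Matrix.sub_mulVec, Matrix.smul_mulVec]
    rw [h1]
    rw [dotProduct_sub, dotProduct_smul]
    simp only [star_trivial, smul_eq_mul]
    linarith

/-- if `f, g` are symmetric with quadratic forms bounded below by `c|ξ|²`,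
then for every symmetric `θ`, `Tr(fθgθ) ≥ c²‖θ‖²` (Frobenius norm squared `= Tr(θᵀθ)`),
and hence `Tr(fθgθ) > 0` whenever `θ ≠ 0`. -/
theorem stmt4 (d : ℕ) (hd : 1 ≤ d) (c : ℝ) (hc : 0 < c)
    (f g : Matrix (Fin d) (Fin d) ℝ) (hf : f.IsSymm) (hg : g.IsSymm)
    (hfl : ∀ ξ : Fin d → ℝ, c * (ξ ⬝ᵥ ξ) ≤ ξ ⬝ᵥ f.mulVec ξ)
    (hgl : ∀ ξ : Fin d → ℝ, c * (ξ ⬝ᵥ ξ) ≤ ξ ⬝ᵥ g.mulVec ξ) :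
    ∀ θ : Matrix (Fin d) (Fin d) ℝ, θ.IsSymm →
      c ^ 2 * (θᵀ * θ).trace ≤ (f * θ * g * θ).trace ∧
      (θ ≠ 0 → 0 < (f * θ * g * θ).trace) := by
  intro θ hθ
  set f' := f - c • (1 : Matrix (Fin d) (Fin d) ℝ) with hf'
  set g' := g - c • (1 : Matrix (Fin d) (Fin d) ℝ) with hg'
  have hf'psd : f'.PosSemidef := sub_smul_psd hf hfl
  have hg'psd : g'.PosSemidef := sub_smul_psd hg hgl
  have hθθ : (θ * θ).PosSemidef := by
    have := Matrix.posSemidef_conjTranspose_mul_self θ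
    rwa [show θᴴ = θ from hθ] at this
  -- expansion
  have hexp : f * θ * g * θ =
      (c ^ 2) • (θ * θ) + c • (f' * (θ * θ)) + c • (θ * g' * θ) + f' * θ * g' * θ := by
    have hfe : f = c • (1 : Matrix (Fin d) (Fin d) ℝ) + f' := by rw [hf']; abel
    have hge : g = c • (1 : Matrix (Fin d) (Fin d) ℝ) + g' := by rw [hg']; abel
    rw [hfe, hge]
    simp only [Matrix.add_mul, Matrix.mul_add, Matrix.smul_mul, Matrix.mul_smul,
      Matrix.one_mul, Matrix.mul_one, smul_smul, smul_add, Matrix.mul_assoc, pow_two]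
    abel
  have h1 : 0 ≤ (f' * (θ * θ)).trace := psd_trace_mul_nonneg hf'psd hθθ
  have h2 : 0 ≤ (θ * g' * θ).trace := by
    have key : (θ * g' * θ) = θᴴ * g' * θ := by rw [show θᴴ = θ from hθ]
    have := hg'psd.conjTranspose_mul_mul_same θ
    rw [← key] at this
    exact psd_trace_nonneg this
  have h3 : 0 ≤ (f' * θ * g' * θ).trace := by
    have hmid : (θᴴ * g' * θ).PosSemidef := hg'psd.conjTranspose_mul_mul_same θ
    rw [show θᴴ = θ from hθ] at hmid
    have heq : f' * θ * g' * θ = f' * (θ * g' * θ) := by noncomm_ring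
    rw [heq]
    exact psd_trace_mul_nonneg hf'psd hmid
  have htt : (θᵀ * θ).trace = (θ * θ).trace := by rw [show θᵀ = θ from hθ]
  have hmain : c ^ 2 * (θᵀ * θ).trace ≤ (f * θ * g * θ).trace := by
    rw [hexp, htt]
    simp only [Matrix.trace_add, Matrix.trace_smul, smul_eq_mul]
    nlinarith [hc.le]
  refine ⟨hmain, fun hne => ?_⟩
  have hpos : 0 < (θᵀ * θ).trace := by
    have hz : θᵀ * θ ≠ 0 := by
      intro h
      exact hne (Matrix.conjTranspose_mul_self_eq_zero.mp (by simpa using h))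
    have hsum : (θᵀ * θ).trace = ∑ i, ∑ j, θ j i * θ j i := by
      rw [Matrix.trace]
      simp [Matrix.mul_apply, Matrix.transpose_apply]
    rw [hsum]
    have hnonneg : ∀ i ∈ Finset.univ, (0:ℝ) ≤ ∑ j, θ j i * θ j i := fun i _ =>
      Finset.sum_nonneg fun j _ => mul_self_nonneg _
    rcases eq_or_lt_of_le (Finset.sum_nonneg hnonneg) with h | h
    · exfalso
      apply hne
      ext j i
      have hall := (Finset.sum_eq_zero_iff_of_nonneg hnonneg).mp h.symm
      have := (Finset.sum_eq_zero_iff_of_nonneg (fun j _ => mul_self_nonneg (θ j i))).mp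
        (hall i (Finset.mem_univ i)) j (Finset.mem_univ j)
      simpa [mul_self_eq_zero] using this
    · exact h
  calc (0:ℝ) < c ^ 2 * (θᵀ * θ).trace := by positivity
    _ ≤ _ := hmain
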